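/- Let Λ be a type, n : ℕ, and ψ : Fin n → Λ → ℂ. Assume (i) the family ψ is linearly independent, and (ii) the pairwise product functions ψ a · ψ b : Λ → ℂ, indexed by unordered pairs {a, b} with a ≠ b, form a linearly independent family. Let c : Equiv.Perm (Fin n) → ℂ and define Ψ : (Fin n → Λ) → ℂ by Ψ(λ) = Σ_{σ} c σ · ∏_{k} ψ k (λ (σ k)). If Ψ(λ) = 0 whenever λ i = λ j for some pair i ≠ j, then c σ = Equiv.Perm.sign σ · c 1 for every σ, and hence Ψ(λ) = c 1 · det (Matrix.of fun i j => ψ i (λ j)) for all λ. -/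

import Mathlib

open Finset Equiv

/-- Dual functionals realized as finite weighted sums of point evaluations. -/
lemma exists_eval_dual {Λ : Type*} {κ : Type*} [Fintype κ] [DecidableEq κ]
    (f : κ → Λ → ℂ) (hf : LinearIndependent ℂ f) (k : κ) :
    ∃ (s : Finset Λ) (w : Λ → ℂ), ∀ l, ∑ x ∈ s, w x * f l x = (if l = k then 1 else 0) := by
  classical
  set Θ : (Λ →₀ ℂ) →ₗ[ℂ] (κ → ℂ) :=
    Finsupp.linearCombination ℂ (fun x => fun l => f l x) with hΘ
  have hmem : (Pi.single k 1 : κ → ℂ) ∈ LinearMap.range Θ := by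
    by_contra hx
    obtain ⟨φ, hφ1, hφ2⟩ := Submodule.exists_dual_map_eq_bot_of_notMem hx inferInstance
    set u : κ → ℂ := fun l => φ (Pi.single l 1) with hu
    have hzero : ∀ x : Λ, ∑ l, f l x * u l = 0 := by
      intro x
      have h1' : (fun l => f l x) ∈ LinearMap.range Θ := ⟨Finsupp.single x 1, by simp [hΘ]⟩
      have hbot : φ (fun l => f l x) = 0 := by
        have := Submodule.mem_map_of_mem (f := φ) h1'
        rw [hφ2] at this
        simpa using this
      have hrepr : (fun l => f l x) = ∑ l, f l x • (Pi.single l 1 : κ → ℂ) := by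
        funext j
        simp [Pi.single_apply, eq_comm]
      rw [hrepr] at hbot
      rw [map_sum] at hbot
      simpa [hu, map_smul] using hbot
    have huz : u = 0 := by
      have hsum : ∑ l, u l • f l = 0 := by
        funext x
        have := hzero x
        simpa [mul_comm] using this
      exact funext (Fintype.linearIndependent_iff.mp hf u hsum)
    apply hφ1
    have : u k = 0 := by rw [huz]; rfl
    simpa [hu] using this
  obtain ⟨w, hw⟩ := hmem
  refine ⟨w.support, w, fun l => ?_⟩
  have hthis := congrFun hw l
  rw [hΘ, Finsupp.linearCombination_apply] at hthis
  simp only [Finsupp.sum, Finset.sum_apply, Pi.smul_apply, smul_eq_mul,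
    Pi.single_apply] at hthis
  simpa using hthis

lemma prod_split {n : ℕ} {i j : Fin n} (hij : i ≠ j) (F G : Fin n → ℂ)
    (hFG : F i * F j = G i * G j) (h : ∀ t, t ≠ i → t ≠ j → F t = G t) :
    ∏ t, F t = ∏ t, G t := by
  classical
  have hjmem : j ∈ univ.erase i := by simp [hij.symm]
  rw [← Finset.mul_prod_erase univ F (mem_univ i),
      ← Finset.mul_prod_erase _ F hjmem, ← mul_assoc,
      ← Finset.mul_prod_erase univ G (mem_univ i),
      ← Finset.mul_prod_erase _ G hjmem, ← mul_assoc, hFG]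
  congr 1
  refine Finset.prod_congr rfl fun t ht => ?_
  simp only [mem_erase] at ht
  exact h t ht.2.1 ht.1

lemma pauli_swap {Λ : Type*} {n : ℕ} {ψ : Fin n → Λ → ℂ}
    (h1 : LinearIndependent ℂ ψ)
    (h2 : LinearIndependent ℂ
      (fun p : {p : Fin n × Fin n // p.1 < p.2} => ψ p.1.1 * ψ p.1.2))
    {c : Equiv.Perm (Fin n) → ℂ}
    (hvanish : ∀ lam : Fin n → Λ, (∃ i j : Fin n, i ≠ j ∧ lam i = lam j) →
      ∑ σ : Equiv.Perm (Fin n), c σ * ∏ k : Fin n, ψ k (lam (σ k)) = 0)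
    (σ₀ : Equiv.Perm (Fin n)) {a b : Fin n} (hab : a < b) :
    c σ₀ + c (σ₀ * Equiv.swap a b) = 0 := by
  classical
  set i := σ₀ a with hi
  set j := σ₀ b with hj
  have hij : i ≠ j := fun h => absurd (σ₀.injective h) hab.ne
  have hΛne : Nonempty Λ := by
    have hne := h1.ne_zero a
    by_contra hempty
    exact hne (funext fun x => absurd ⟨x⟩ hempty)
  obtain ⟨x₀⟩ := hΛne
  choose su wu hwu using fun k => exists_eval_dual ψ h1 k
  obtain ⟨sp, wp, hwp⟩ := exists_eval_dual _ h2 ⟨(a, b), hab⟩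
  set s : Fin n → Finset Λ := fun t =>
    if t = i then sp else if t = j then {x₀} else su (σ₀⁻¹ t) with hs
  set w : Fin n → Λ → ℂ := fun t =>
    if t = i then wp else if t = j then (fun _ => 1) else wu (σ₀⁻¹ t) with hwdef
  set h : Equiv.Perm (Fin n) → Fin n → Λ → ℂ := fun σ t =>
    if t = i then (fun x => ψ (σ⁻¹ i) x * ψ (σ⁻¹ j) x)
    else if t = j then (fun _ => 1) else ψ (σ⁻¹ t) with hhdef
  set subst : (Fin n → Λ) → (Fin n → Λ) := fun v t => if t = j then v i else v t with hsubst
  set σ' : Equiv.Perm (Fin n) := σ₀ * Equiv.swap a b with hσ'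
  have hinva : σ₀⁻¹ i = a := by rw [hi]; simp
  have hinvb : σ₀⁻¹ j = b := by rw [hj]; simp
  have hσ'inv : ∀ t, σ'⁻¹ t = Equiv.swap a b (σ₀⁻¹ t) := by
    intro t; rw [hσ']; simp [Equiv.Perm.mul_apply]
  -- Step 1 : product rewriting
  have step1 : ∀ (v : Fin n → Λ) (σ : Equiv.Perm (Fin n)),
      (∏ k, ψ k (subst v (σ k))) = ∏ t, h σ t (v t) := by
    intro v σ
    have e1 : (∏ k, ψ k (subst v (σ k))) = ∏ t, ψ (σ⁻¹ t) (subst v t) := by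
      rw [← Equiv.prod_comp σ (fun t => ψ (σ⁻¹ t) (subst v t))]
      simp
    rw [e1]
    apply prod_split hij
    · simp [hsubst, hhdef, hij, hij.symm]
    · intro t hti htj
      simp [hsubst, hhdef, hti, htj]
  -- the weighted sum
  set S : ℂ := ∑ v ∈ Fintype.piFinset s, (∏ t, w t (v t)) *
      (∑ σ : Equiv.Perm (Fin n), c σ * ∏ k, ψ k (subst v (σ k))) with hS
  have hS0 : S = 0 := by
    rw [hS]
    apply Finset.sum_eq_zero
    intro v _
    rw [hvanish (subst v) ⟨i, j, hij, by simp [hsubst, hij]⟩]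
    ring
  -- expansion of S
  have hSexp : S = ∑ σ : Equiv.Perm (Fin n), c σ * ∏ t, ∑ x ∈ s t, w t x * h σ t x := by
    rw [hS]
    have e2 : ∀ v ∈ Fintype.piFinset s,
        (∏ t, w t (v t)) * (∑ σ : Equiv.Perm (Fin n), c σ * ∏ k, ψ k (subst v (σ k)))
        = ∑ σ : Equiv.Perm (Fin n), c σ * ∏ t, (w t (v t) * h σ t (v t)) := by
      intro v _
      rw [Finset.mul_sum]
      refine Finset.sum_congr rfl fun σ _ => ?_
      rw [step1 v σ, Finset.prod_mul_distrib]
      ring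
    rw [Finset.sum_congr rfl e2, Finset.sum_comm]
    refine Finset.sum_congr rfl fun σ _ => ?_
    rw [Finset.prod_univ_sum s (fun t x => w t x * h σ t x), Finset.mul_sum]
  -- evaluate the factors
  have factor_j : ∀ σ : Equiv.Perm (Fin n), (∑ x ∈ s j, w j x * h σ j x) = 1 := by
    intro σ
    simp [hs, hwdef, hhdef, hij.symm]
  have factor_i : ∀ σ : Equiv.Perm (Fin n),
      (∑ x ∈ s i, w i x * h σ i x) =
        if (σ⁻¹ i = a ∧ σ⁻¹ j = b) ∨ (σ⁻¹ i = b ∧ σ⁻¹ j = a) then 1 else 0 := by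
    intro σ
    have hne : σ⁻¹ i ≠ σ⁻¹ j := fun h => hij (by
      have := congrArg σ h; simpa using this)
    rcases hne.lt_or_gt with hlt | hlt
    · have := hwp ⟨(σ⁻¹ i, σ⁻¹ j), hlt⟩
      simp only [Subtype.mk.injEq, Prod.mk.injEq] at this
      rw [hs, hwdef, hhdef]
      simp only [eq_self_iff_true, if_true]
      rw [show (∑ x ∈ sp, wp x * (ψ (σ⁻¹ i) x * ψ (σ⁻¹ j) x))
          = ∑ x ∈ sp, wp x * (ψ (σ⁻¹ i) * ψ (σ⁻¹ j)) x from rfl, this]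
      by_cases hcase : σ⁻¹ i = a ∧ σ⁻¹ j = b
      · simp [hcase]
      · have : ¬((σ⁻¹ i = b ∧ σ⁻¹ j = a)) := by
          rintro ⟨h1', h2'⟩
          rw [h1', h2'] at hlt
          exact absurd hab (asymm hlt)
        rw [if_neg hcase, if_neg (by tauto)]
    · have := hwp ⟨(σ⁻¹ j, σ⁻¹ i), hlt⟩
      simp only [Subtype.mk.injEq, Prod.mk.injEq] at this
      rw [hs, hwdef, hhdef]
      simp only [eq_self_iff_true, if_true]
      rw [show (∑ x ∈ sp, wp x * (ψ (σ⁻¹ i) x * ψ (σ⁻¹ j) x))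
          = ∑ x ∈ sp, wp x * (ψ (σ⁻¹ j) * ψ (σ⁻¹ i)) x by
        refine Finset.sum_congr rfl fun x _ => ?_
        simp [mul_comm], this]
      by_cases hcase : σ⁻¹ i = b ∧ σ⁻¹ j = a
      · simp [hcase]
      · have hno : ¬(σ⁻¹ i = a ∧ σ⁻¹ j = b) := by
          rintro ⟨h1', h2'⟩
          rw [h1', h2'] at hlt
          exact absurd hab (asymm hlt)
        have : ¬(σ⁻¹ j = a ∧ σ⁻¹ i = b) := fun hc => hcase ⟨hc.2, hc.1⟩
        rw [if_neg this, if_neg (by tauto)]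
  have factor_t : ∀ (σ : Equiv.Perm (Fin n)) (t : Fin n), t ≠ i → t ≠ j →
      (∑ x ∈ s t, w t x * h σ t x) =
        if σ⁻¹ t = σ₀⁻¹ t then 1 else 0 := by
    intro σ t hti htj
    rw [hs, hwdef, hhdef]
    simp only [if_neg hti, if_neg htj]
    exact hwu (σ₀⁻¹ t) (σ⁻¹ t)
  -- product of factors
  have hprod : ∀ σ : Equiv.Perm (Fin n),
      (∏ t, ∑ x ∈ s t, w t x * h σ t x) =
        if σ = σ₀ then 1 else if σ = σ' then 1 else 0 := by
    intro σ
    by_cases hc1 : σ = σ₀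
    · subst hc1
      rw [if_pos rfl]
      apply Finset.prod_eq_one
      intro t _
      by_cases hti : t = i
      · subst hti; rw [factor_i]; simp [hinva, hinvb]
      by_cases htj : t = j
      · subst htj; exact factor_j _
      · rw [factor_t _ t hti htj]; simp
    by_cases hc2 : σ = σ'
    · subst hc2
      rw [if_neg hc1, if_pos rfl]
      apply Finset.prod_eq_one
      intro t _
      by_cases hti : t = i
      · subst hti
        rw [factor_i]
        have e1 : σ'⁻¹ i = b := by rw [hσ'inv, hinva, Equiv.swap_apply_left]
        have e2 : σ'⁻¹ j = a := by rw [hσ'inv, hinvb, Equiv.swap_apply_right]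
        simp [e1, e2]
      by_cases htj : t = j
      · subst htj; exact factor_j _
      · rw [factor_t _ t hti htj]
        have hta : σ₀⁻¹ t ≠ a := fun hcc => hti (by
          rw [hi, ← hcc]; simp)
        have htb : σ₀⁻¹ t ≠ b := fun hcc => htj (by
          rw [hj, ← hcc]; simp)
        rw [hσ'inv, Equiv.swap_apply_of_ne_of_ne hta htb]
        simp
    · rw [if_neg hc1, if_neg hc2]
      -- some factor must be zero
      by_contra hnz
      have hall : ∀ t, (∑ x ∈ s t, w t x * h σ t x) ≠ 0 := by
        intro t hzero
        exact hnz (Finset.prod_eq_zero (mem_univ t) hzero)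
      have hoff : ∀ t, t ≠ i → t ≠ j → σ⁻¹ t = σ₀⁻¹ t := by
        intro t hti htj
        have := hall t
        rw [factor_t _ t hti htj] at this
        by_contra hcc
        rw [if_neg hcc] at this
        exact this rfl
      have hi' := hall i
      rw [factor_i] at hi'
      by_cases hcase : σ⁻¹ i = a ∧ σ⁻¹ j = b
      · apply hc1
        have : σ⁻¹ = σ₀⁻¹ := by
          ext t
          by_cases hti : t = i
          · subst hti; rw [hcase.1, hinva]
          by_cases htj : t = j
          · subst htj; rw [hcase.2, hinvb]
          · rw [hoff t hti htj]
        exact inv_injective this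
      · have hcase2 : σ⁻¹ i = b ∧ σ⁻¹ j = a := by
          by_contra hcc
          rw [if_neg (by tauto)] at hi'
          exact hi' rfl
        apply hc2
        have : σ⁻¹ = σ'⁻¹ := by
          ext t
          by_cases hti : t = i
          · subst hti
            rw [hcase2.1, hσ'inv, hinva, Equiv.swap_apply_left]
          by_cases htj : t = j
          · subst htj
            rw [hcase2.2, hσ'inv, hinvb, Equiv.swap_apply_right]
          · rw [hoff t hti htj, hσ'inv]
            have hta : σ₀⁻¹ t ≠ a := fun hcc => hti (by rw [hi, ← hcc]; simp)
            have htb : σ₀⁻¹ t ≠ b := fun hcc => htj (by rw [hj, ← hcc]; simp)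
            rw [Equiv.swap_apply_of_ne_of_ne hta htb]
        exact inv_injective this
  -- conclude
  have hσσ' : σ₀ ≠ σ' := by
    intro hcc
    have h1' : σ₀ * 1 = σ₀ * Equiv.swap a b := by rw [mul_one, ← hσ', ← hcc]
    have h2' := mul_left_cancel h1'
    have : a = b := by
      have h3' := congrArg (fun e : Equiv.Perm (Fin n) => e a) h2'
      simpa using h3'
    exact hab.ne this
  have : S = c σ₀ + c σ' := by
    rw [hSexp]
    have hsummand : ∀ σ : Equiv.Perm (Fin n),
        c σ * (if σ = σ₀ then 1 else if σ = σ' then 1 else 0)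
        = (if σ = σ₀ then c σ₀ else 0) + (if σ = σ' then c σ' else 0) := by
      intro σ
      by_cases hc1 : σ = σ₀
      · rw [hc1]; simp [hσσ']
      by_cases hc2 : σ = σ'
      · rw [hc2]; simp [Ne.symm hσσ']
      · simp [hc1, hc2]
    calc ∑ σ : Equiv.Perm (Fin n), c σ * ∏ t, ∑ x ∈ s t, w t x * h σ t x
        = ∑ σ : Equiv.Perm (Fin n),
            ((if σ = σ₀ then c σ₀ else 0) + (if σ = σ' then c σ' else 0)) := by
          refine Finset.sum_congr rfl fun σ _ => ?_
          rw [hprod σ, hsummand σ]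
      _ = c σ₀ + c σ' := by
          rw [Finset.sum_add_distrib, Finset.sum_ite_eq' univ σ₀ (fun _ => c σ₀),
            Finset.sum_ite_eq' univ σ' (fun _ => c σ')]
          simp
  rw [← this, hS0]

theorem pauli_exclusion {Λ : Type*} (n : ℕ) (ψ : Fin n → Λ → ℂ)
    (h1 : LinearIndependent ℂ ψ)
    (h2 : LinearIndependent ℂ
      (fun p : {p : Fin n × Fin n // p.1 < p.2} => ψ p.1.1 * ψ p.1.2))
    (c : Equiv.Perm (Fin n) → ℂ)
    (Ψ : (Fin n → Λ) → ℂ)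
    (hΨ : ∀ lam : Fin n → Λ,
      Ψ lam = ∑ σ : Equiv.Perm (Fin n), c σ * ∏ k : Fin n, ψ k (lam (σ k)))
    (hvanish : ∀ lam : Fin n → Λ, (∃ i j : Fin n, i ≠ j ∧ lam i = lam j) → Ψ lam = 0) :
    (∀ σ : Equiv.Perm (Fin n), c σ = ((Equiv.Perm.sign σ : ℤ) : ℂ) * c 1) ∧
      ∀ lam : Fin n → Λ, Ψ lam = c 1 * (Matrix.of fun i j => ψ i (lam j)).det := by
  classical
  have hv' : ∀ lam : Fin n → Λ, (∃ i j : Fin n, i ≠ j ∧ lam i = lam j) →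
      ∑ σ : Equiv.Perm (Fin n), c σ * ∏ k : Fin n, ψ k (lam (σ k)) = 0 := by
    intro lam hl
    rw [← hΨ lam]
    exact hvanish lam hl
  have key : ∀ (σ₀ : Equiv.Perm (Fin n)) (a b : Fin n), a ≠ b →
      c (σ₀ * Equiv.swap a b) = - c σ₀ := by
    intro σ₀ a b hab
    rcases hab.lt_or_gt with hlt | hlt
    · exact eq_neg_of_add_eq_zero_right (pauli_swap h1 h2 hv' σ₀ hlt)
    · rw [Equiv.swap_comm]
      exact eq_neg_of_add_eq_zero_right (pauli_swap h1 h2 hv' σ₀ hlt)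
  have part1 : ∀ σ : Equiv.Perm (Fin n), c σ = ((Equiv.Perm.sign σ : ℤ) : ℂ) * c 1 := by
    intro σ
    refine Equiv.Perm.swap_induction_on' σ (by simp) ?_
    intro f x y hxy ih
    rw [key f x y hxy, ih, Equiv.Perm.sign_mul, Equiv.Perm.sign_swap hxy]
    push_cast
    ring
  refine ⟨part1, fun lam => ?_⟩
  rw [hΨ lam, Matrix.det_apply']
  have reindex : ∀ σ : Equiv.Perm (Fin n),
      (∏ k, ψ k (lam (σ k))) = ∏ t, ψ (σ⁻¹ t) (lam t) := by
    intro σ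
    rw [← Equiv.prod_comp σ (fun t => ψ (σ⁻¹ t) (lam t))]
    simp
  calc ∑ σ : Equiv.Perm (Fin n), c σ * ∏ k, ψ k (lam (σ k))
      = ∑ σ : Equiv.Perm (Fin n),
          c 1 * (((Equiv.Perm.sign σ : ℤ) : ℂ) * ∏ t, ψ (σ⁻¹ t) (lam t)) := by
        refine Finset.sum_congr rfl fun σ _ => ?_
        rw [part1 σ, reindex σ]
        ring
    _ = ∑ σ : Equiv.Perm (Fin n),
          c 1 * (((Equiv.Perm.sign σ : ℤ) : ℂ) * ∏ t, ψ (σ t) (lam t)) := by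
        rw [← Equiv.sum_comp (Equiv.inv (Equiv.Perm (Fin n)))
          (fun σ => c 1 * (((Equiv.Perm.sign σ : ℤ) : ℂ) * ∏ t, ψ (σ t) (lam t)))]
        refine Finset.sum_congr rfl fun σ _ => ?_
        simp [Equiv.Perm.sign_inv]
    _ = c 1 * ∑ σ : Equiv.Perm (Fin n),
          ((Equiv.Perm.sign σ : ℤ) : ℂ) * ∏ t, (Matrix.of fun i j => ψ i (lam j)) (σ t) t := by
        rw [Finset.mul_sum]
        exact Finset.sum_congr rfl fun σ _ => rfl
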